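/- arXiv:2012.07312 — 3 statements merged into one kernel-verified Lean document; each statement's English description precedes it below -/
import Mathlib

section
/- If A and B are nonnegative (entrywise) square matrices of the same size with A ≥ B entrywise, then the spectral radius of A is at least the spectral radius of B. -/
open Matrix Polynomial

/-- Spectral radius of a real square matrix: the supremum of the absolute values of its
complex eigenvalues (roots of the characteristic polynomial over ℂ). -/
noncomputable def specRad {n : ℕ} (M : Matrix (Fin n) (Fin n) ℝ) : ℝ :=
  sSup {x : ℝ | ∃ μ : ℂ, ((M.map (algebraMap ℝ ℂ)).charpoly).IsRoot μ ∧ x = ‖μ‖}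

attribute [local instance] Matrix.linftyOpNormedRing Matrix.linftyOpNormedAlgebra

noncomputable local instance {n : ℕ} : CompleteSpace (Matrix (Fin n) (Fin n) ℂ) :=
  (by infer_instance : CompleteSpace (Fin n → Fin n → ℂ))

/-- For a complex matrix, membership in the spectrum is the same as being a root of the
characteristic polynomial. -/
lemma mem_spectrum_iff_isRoot_charpoly {n : ℕ} (M : Matrix (Fin n) (Fin n) ℂ) (μ : ℂ) :
    μ ∈ spectrum ℂ M ↔ M.charpoly.IsRoot μ := by
  have hdet : M.charpoly.eval μ = (algebraMap ℂ (Matrix (Fin n) (Fin n) ℂ) μ - M).det := by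
    rw [Matrix.charpoly, ← Polynomial.coe_evalRingHom, RingHom.map_det]
    congr 1
    ext i j
    by_cases h : i = j
    · subst h
      simp [Matrix.charmatrix_apply_eq, Matrix.algebraMap_matrix_apply]
    · simp [Matrix.charmatrix_apply_ne _ _ _ h, Matrix.algebraMap_matrix_apply, h]
  rw [spectrum.mem_iff, IsRoot, hdet, Matrix.isUnit_iff_isUnit_det, isUnit_iff_ne_zero, not_not]

lemma specRad_set_finite {n : ℕ} (M : Matrix (Fin n) (Fin n) ℝ) :
    {x : ℝ | ∃ μ : ℂ, ((M.map (algebraMap ℝ ℂ)).charpoly).IsRoot μ ∧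
      x = ‖μ‖}.Finite := by
  have h1 : {μ : ℂ | ((M.map (algebraMap ℝ ℂ)).charpoly).IsRoot μ}.Finite :=
    Polynomial.finite_setOf_isRoot (Matrix.charpoly_monic _).ne_zero
  have : {x : ℝ | ∃ μ : ℂ, ((M.map (algebraMap ℝ ℂ)).charpoly).IsRoot μ ∧
      x = ‖μ‖} = (fun z : ℂ => ‖z‖) '' {μ : ℂ | ((M.map (algebraMap ℝ ℂ)).charpoly).IsRoot μ} := by
    ext x; simp [eq_comm, and_comm]
  rw [this]
  exact h1.image _

lemma specRad_nonneg {n : ℕ} (M : Matrix (Fin n) (Fin n) ℝ) : 0 ≤ specRad M := by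
  rcases Set.eq_empty_or_nonempty
    {x : ℝ | ∃ μ : ℂ, ((M.map (algebraMap ℝ ℂ)).charpoly).IsRoot μ ∧ x = ‖μ‖} with h | h
  · unfold specRad; rw [h, Real.sSup_empty]
  · obtain ⟨x, hx⟩ := h
    refine le_trans ?_ (le_csSup (specRad_set_finite M).bddAbove hx)
    obtain ⟨μ, _, rfl⟩ := hx
    positivity

/-- entrywise bounds for powers -/
lemma pow_entry_bounds {n : ℕ} (A B : Matrix (Fin n) (Fin n) ℝ)
    (hB : ∀ i j, 0 ≤ B i j) (hAB : ∀ i j, B i j ≤ A i j) (k : ℕ) :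
    ∀ i j, 0 ≤ (B ^ k) i j ∧ (B ^ k) i j ≤ (A ^ k) i j := by
  induction k with
  | zero => intro i j; simp [Matrix.one_apply]; split_ifs <;> simp
  | succ k ih =>
    intro i j
    rw [pow_succ, pow_succ, Matrix.mul_apply, Matrix.mul_apply]
    constructor
    · exact Finset.sum_nonneg fun l _ => mul_nonneg (ih i l).1 (hB l j)
    · exact Finset.sum_le_sum fun l _ => mul_le_mul (ih i l).2 (hAB l j) (hB l j)
        (le_trans (ih i l).1 (ih i l).2)

theorem spectral_radius_mono_of_nonneg {n : ℕ} (A B : Matrix (Fin n) (Fin n) ℝ)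
    (hB : ∀ i j, 0 ≤ B i j) (hAB : ∀ i j, B i j ≤ A i j) :
    specRad B ≤ specRad A := by
  set A' := A.map (algebraMap ℝ ℂ) with hA'
  set B' := B.map (algebraMap ℝ ℂ) with hB'
  -- norm comparison for powers
  have hnorm : ∀ k : ℕ, ‖B' ^ k‖₊ ≤ ‖A' ^ k‖₊ := by
    intro k
    have hBk : B' ^ k = (B ^ k).map (algebraMap ℝ ℂ) := by
      rw [hB']
      simpa [RingHom.mapMatrix_apply] using (map_pow ((algebraMap ℝ ℂ).mapMatrix) B k).symm
    have hAk : A' ^ k = (A ^ k).map (algebraMap ℝ ℂ) := by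
      rw [hA']
      simpa [RingHom.mapMatrix_apply] using (map_pow ((algebraMap ℝ ℂ).mapMatrix) A k).symm
    rw [hBk, hAk, Matrix.linfty_opNNNorm_def, Matrix.linfty_opNNNorm_def]
    refine Finset.sup_mono_fun fun i _ => Finset.sum_le_sum fun j _ => ?_
    have h1 := (pow_entry_bounds A B hB hAB k i j).1
    have h2 := (pow_entry_bounds A B hB hAB k i j).2
    rw [← NNReal.coe_le_coe]
    simp only [Matrix.map_apply, Complex.coe_algebraMap, coe_nnnorm, Complex.norm_real,
      Real.norm_eq_abs]
    rw [abs_of_nonneg h1, abs_of_nonneg (le_trans h1 h2)]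
    exact h2
  -- spectral radius comparison via Gelfand's formula
  have hspec : spectralRadius ℂ B' ≤ spectralRadius ℂ A' := by
    have hBlim := spectrum.pow_nnnorm_pow_one_div_tendsto_nhds_spectralRadius B'
    have hAlim := spectrum.pow_nnnorm_pow_one_div_tendsto_nhds_spectralRadius A'
    refine le_of_tendsto_of_tendsto hBlim hAlim ?_
    filter_upwards with k
    exact ENNReal.rpow_le_rpow (by exact_mod_cast hnorm k) (by positivity)
  -- spectralRadius A' ≤ specRad A
  have hA2 : spectralRadius ℂ A' ≤ ENNReal.ofReal (specRad A) := by
    rw [spectralRadius]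
    refine iSup₂_le fun μ hμ => ?_
    have : ‖μ‖ ∈ {x : ℝ | ∃ ν : ℂ, (A'.charpoly).IsRoot ν ∧ x = ‖ν‖} :=
      ⟨μ, (mem_spectrum_iff_isRoot_charpoly A' μ).mp hμ, rfl⟩
    have hle : ‖μ‖ ≤ specRad A := le_csSup (specRad_set_finite A).bddAbove this
    calc (‖μ‖₊ : ENNReal) = ENNReal.ofReal (‖μ‖) := by
          rw [ofReal_norm, enorm_eq_nnnorm]
      _ ≤ ENNReal.ofReal (specRad A) := ENNReal.ofReal_le_ofReal hle
  -- conclude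
  refine Real.sSup_le ?_ (specRad_nonneg A)
  rintro x ⟨μ, hμ, rfl⟩
  have hμs : μ ∈ spectrum ℂ B' := (mem_spectrum_iff_isRoot_charpoly B' μ).mpr hμ
  have h1 : (‖μ‖₊ : ENNReal) ≤ spectralRadius ℂ B' := le_iSup₂ (f := fun k _ => (‖k‖₊ : ENNReal)) μ hμs
  have h2 : (‖μ‖₊ : ENNReal) ≤ ENNReal.ofReal (specRad A) := h1.trans (hspec.trans hA2)
  have h3 : ENNReal.ofReal (‖μ‖) ≤ ENNReal.ofReal (specRad A) := by
    rwa [ofReal_norm, enorm_eq_nnnorm]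
  exact (ENNReal.ofReal_le_ofReal_iff (specRad_nonneg A)).mp h3
end

section
/- Waterfilling projection onto the trace-sphere of PSD matrices: let X = U(-D)Uᴴ be a Hermitian matrix with unitary U and real diagonal D. Then the projection of X (in Frobenius norm) onto the set {Q Hermitian PSD : trace(Q) = P} equals U(μI - D)⁺Uᴴ, where (·)⁺ denotes entrywise positive part on the diagonal and μ ∈ ℝ is chosen so that trace((μI - D)⁺) = P. -/
open Matrix
open scoped ComplexOrder

/-- Frobenius norm of a complex matrix. -/
noncomputable def frob {m n : ℕ} (M : Matrix (Fin m) (Fin n) ℂ) : ℝ :=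
  Real.sqrt (∑ i, ∑ j, ‖M i j‖ ^ 2)

-- scalar key lemma
lemma key_sum {n : ℕ} (D q : Fin n → ℝ) (μ : ℝ) (hq : ∀ i, 0 ≤ q i)
    (hsum : ∑ i, q i = ∑ i, max (μ - D i) 0) :
    ∑ i, (max (μ - D i) 0 + D i)^2 ≤ ∑ i, (q i + D i)^2 := by
  have h : ∀ i, (max (μ - D i) 0 + D i)^2 + 2*μ*(q i - max (μ - D i) 0) ≤ (q i + D i)^2 := by
    intro i
    rcases le_or_gt (μ - D i) 0 with h0 | h0
    · rw [max_eq_right h0]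
      nlinarith [hq i, sq_nonneg (q i)]
    · rw [max_eq_left h0.le]
      nlinarith [sq_nonneg (q i + D i - μ)]
  have hs := Finset.sum_le_sum (s := (Finset.univ : Finset (Fin n))) (fun i _ => h i)
  have e : ∑ i, (2*μ*(q i - max (μ - D i) 0)) = 0 := by
    rw [← Finset.mul_sum, Finset.sum_sub_distrib, hsum, sub_self, mul_zero]
  rw [Finset.sum_add_distrib, e, add_zero] at hs
  exact hs

-- sum of squares via trace
lemma sumSq_eq_trace {n : ℕ} (A : Matrix (Fin n) (Fin n) ℂ) :
    ∑ i, ∑ j, ‖A i j‖ ^ 2 = (Matrix.trace (Aᴴ * A)).re := by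
  have : Matrix.trace (Aᴴ * A) = ∑ j, ∑ i, ((Complex.normSq (A i j) : ℝ) : ℂ) := by
    simp only [Matrix.trace, Matrix.diag, Matrix.mul_apply, Matrix.conjTranspose_apply]
    congr 1; ext j; congr 1; ext i
    rw [Complex.normSq_eq_conj_mul_self, starRingEnd_apply]
  rw [this, Finset.sum_comm]
  push_cast
  simp [Complex.sq_norm]

lemma sumSq_conj {n : ℕ} (U A : Matrix (Fin n) (Fin n) ℂ) (hU' : Uᴴ * U = 1) :
    ∑ i, ∑ j, ‖(U * A * Uᴴ) i j‖ ^ 2 = ∑ i, ∑ j, ‖A i j‖ ^ 2 := by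
  rw [sumSq_eq_trace, sumSq_eq_trace]
  congr 1
  have : (U * A * Uᴴ)ᴴ * (U * A * Uᴴ) = U * (Aᴴ * A) * Uᴴ := by
    simp only [Matrix.conjTranspose_mul, Matrix.conjTranspose_conjTranspose, Matrix.mul_assoc]
    rw [← Matrix.mul_assoc Uᴴ U, hU', Matrix.one_mul]
  rw [this, Matrix.trace_mul_cycle, ← Matrix.mul_assoc, hU', Matrix.one_mul]

theorem waterfilling_projection {n : ℕ} (P : ℝ) (hP : 0 < P)
    (U : Matrix (Fin n) (Fin n) ℂ) (hU : U * Uᴴ = 1) (hU' : Uᴴ * U = 1)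
    (D : Fin n → ℝ) (μ : ℝ) (hμ : ∑ i, max (μ - D i) 0 = P)
    (X : Matrix (Fin n) (Fin n) ℂ)
    (hX : X = U * Matrix.diagonal (fun i => (-(D i) : ℂ)) * Uᴴ) :
    let K : Set (Matrix (Fin n) (Fin n) ℂ) := {Q | Q.PosSemidef ∧ Q.trace = (P : ℂ)}
    let Qw : Matrix (Fin n) (Fin n) ℂ :=
      U * Matrix.diagonal (fun i => ((max (μ - D i) 0 : ℝ) : ℂ)) * Uᴴ
    Qw ∈ K ∧ ∀ Q ∈ K, frob (Qw - X) ≤ frob (Q - X) := by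
  intro K Qw
  set m : Fin n → ℝ := fun i => max (μ - D i) 0 with hm
  have hdiagPSD : (Matrix.diagonal (fun i => ((m i : ℝ) : ℂ))).PosSemidef := by
    refine Matrix.posSemidef_diagonal_iff.mpr fun i => ?_
    rw [Complex.le_def]
    simp [hm, le_max_right]
  constructor
  · refine ⟨hdiagPSD.mul_mul_conjTranspose_same U, ?_⟩
    show Matrix.trace (U * Matrix.diagonal (fun i => ((m i : ℝ) : ℂ)) * Uᴴ) = (P : ℂ)
    rw [Matrix.trace_mul_cycle, hU', Matrix.one_mul,
      Matrix.trace_diagonal]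
    exact_mod_cast hμ
  · intro Q hQ
    obtain ⟨hQpsd, hQtr⟩ := hQ
    set Q' : Matrix (Fin n) (Fin n) ℂ := Uᴴ * Q * U with hQ'
    have hQ'psd : Q'.PosSemidef := hQpsd.conjTranspose_mul_mul_same U
    set q : Fin n → ℝ := fun i => (Q' i i).re with hq
    have hqnonneg : ∀ i, 0 ≤ q i := by
      intro i
      have h1 : 0 ≤ Q' i i := hQ'psd.diag_nonneg
      rw [Complex.le_def] at h1
      exact h1.1
    have hqsum : ∑ i, q i = P := by
      have htr : Q'.trace = (P : ℂ) := by
        rw [hQ', Matrix.trace_mul_cycle, hU, Matrix.one_mul, hQtr]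
      have := congrArg Complex.re htr
      rw [Matrix.trace] at this
      simpa [Matrix.diag, Complex.re_sum] using this
    set A : Matrix (Fin n) (Fin n) ℂ := Q' - Matrix.diagonal (fun i => (-(D i) : ℂ)) with hA
    have e2 : Q - X = U * A * Uᴴ := by
      rw [hX, hA, Matrix.mul_sub, Matrix.sub_mul]
      congr 1
      have h3 : U * (Uᴴ * Q * U) * Uᴴ = (U * Uᴴ) * Q * (U * Uᴴ) := by noncomm_ring
      rw [hQ', h3, hU, Matrix.one_mul, Matrix.mul_one]
    have e1 : Qw - X = U * Matrix.diagonal (fun i => ((m i + D i : ℝ) : ℂ)) * Uᴴ := by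
      rw [hX]
      rw [show Qw = U * Matrix.diagonal (fun i => ((m i : ℝ) : ℂ)) * Uᴴ from rfl]
      rw [← Matrix.sub_mul, ← Matrix.mul_sub, Matrix.diagonal_sub]
      congr 2
      ext i
      push_cast
      ring
    have S_diag : ∑ i, ∑ j,
        ‖(Matrix.diagonal (fun i => ((m i + D i : ℝ) : ℂ))) i j‖ ^ 2
        = ∑ i, (m i + D i) ^ 2 := by
      refine Finset.sum_congr rfl fun i _ => ?_
      rw [Finset.sum_eq_single i]
      · rw [Matrix.diagonal_apply_eq, Complex.sq_norm, Complex.normSq_ofReal, sq]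
      · intro j _ hj
        simp [Matrix.diagonal_apply_ne' _ hj]
      · simp
    have hAii : ∀ i, (q i + D i) ^ 2 ≤ ‖A i i‖ ^ 2 := by
      intro i
      have : A i i = Q' i i + (D i : ℂ) := by
        simp [hA, Matrix.diagonal_apply_eq, sub_neg_eq_add]
      rw [this, Complex.sq_norm, Complex.normSq_apply]
      simp only [Complex.add_re, Complex.ofReal_re, Complex.add_im, Complex.ofReal_im, add_zero]
      nlinarith [sq_nonneg ((Q' i i).im)]
    have hdiagle : ∑ i, ‖A i i‖ ^ 2 ≤ ∑ i, ∑ j, ‖A i j‖ ^ 2 := by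
      refine Finset.sum_le_sum fun i _ => ?_
      refine Finset.single_le_sum (f := fun j => ‖A i j‖ ^ 2) ?_ (Finset.mem_univ i)
      intro j _
      positivity
    have hkey : ∑ i, (m i + D i) ^ 2 ≤ ∑ i, (q i + D i) ^ 2 := by
      refine key_sum D q μ hqnonneg ?_
      rw [hqsum, ← hμ]
    have main : ∑ i, ∑ j, ‖(Qw - X) i j‖ ^ 2
        ≤ ∑ i, ∑ j, ‖(Q - X) i j‖ ^ 2 := by
      rw [e1, e2, sumSq_conj U _ hU', sumSq_conj U A hU', S_diag]
      calc ∑ i, (m i + D i) ^ 2 ≤ ∑ i, (q i + D i) ^ 2 := hkey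
        _ ≤ ∑ i, ‖A i i‖ ^ 2 := Finset.sum_le_sum fun i _ => hAii i
        _ ≤ ∑ i, ∑ j, ‖A i j‖ ^ 2 := hdiagle
    exact Real.sqrt_le_sqrt main
end

section
/- Projection distance under trace-budget perturbation: for a fixed Hermitian matrix Y and powers P, P' > 0, the projections of Y onto the sets {Q PSD : trace Q = P} and {Q PSD : trace Q = P'} satisfy ‖[Y]_{P} - [Y]_{P'}‖_F ≤ |P - P'|. -/
open Matrix
open scoped ComplexOrder

open ComplexConjugate
open scoped InnerProductSpace

noncomputable def vmap {n : ℕ} (M : Matrix (Fin n) (Fin n) ℂ) :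
    EuclideanSpace ℂ (Fin n × Fin n) := WithLp.toLp 2 (fun p : Fin n × Fin n => M p.1 p.2)

lemma frob_eq_norm {n : ℕ} (M : Matrix (Fin n) (Fin n) ℂ) : frob M = ‖vmap M‖ := by
  rw [EuclideanSpace.norm_eq, frob]
  congr 1
  rw [Fintype.sum_prod_type]
  simp [vmap]

lemma vmap_sub {n : ℕ} (M N : Matrix (Fin n) (Fin n) ℂ) :
    vmap (M - N) = vmap M - vmap N := rfl

lemma vmap_add {n : ℕ} (M N : Matrix (Fin n) (Fin n) ℂ) :
    vmap (M + N) = vmap M + vmap N := rfl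

lemma vmap_smul {n : ℕ} (c : ℂ) (M : Matrix (Fin n) (Fin n) ℂ) :
    vmap (c • M) = c • vmap M := rfl

lemma psd_smul {n : ℕ} {M : Matrix (Fin n) (Fin n) ℂ} (hM : M.PosSemidef)
    {c : ℝ} (hc : 0 ≤ c) : ((c : ℂ) • M).PosSemidef := by
  constructor
  · unfold Matrix.IsHermitian
    rw [conjTranspose_smul, hM.1.eq]
    simp
  · intro x
    exact (hM.smul (a := (c : ℂ)) (by exact_mod_cast Complex.zero_le_real.mpr hc)).2 x

lemma aux_limit {x c : ℝ} (hc : 0 ≤ c) (h : ∀ t : ℝ, 0 < t → t ≤ 1 → 0 ≤ 2*x + t*c) :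
    0 ≤ x := by
  by_contra hx
  push_neg at hx
  rcases eq_or_lt_of_le hc with hc0 | hc0
  · have := h 1 one_pos le_rfl
    rw [← hc0] at this
    linarith
  · have ht : 0 < -x / c := div_pos (by linarith) hc0
    have h1 := h (min 1 (-x/c)) (lt_min one_pos ht) (min_le_left _ _)
    have h2 : min 1 (-x/c) * c ≤ (-x/c) * c :=
      mul_le_mul_of_nonneg_right (min_le_right _ _) hc
    rw [div_mul_cancel₀ _ (ne_of_gt hc0)] at h2
    linarith

lemma vi {E : Type*} [NormedAddCommGroup E] [InnerProductSpace ℂ E] {a y q : E}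
    (h : ∀ t : ℝ, 0 < t → t ≤ 1 → ‖a - y‖ ≤ ‖a + (t : ℂ) • (q - a) - y‖) :
    0 ≤ (⟪a - y, q - a⟫_ℂ).re := by
  apply aux_limit (c := ‖q - a‖ ^ 2) (sq_nonneg _)
  intro t ht ht1
  have h1 := h t ht ht1
  have h2 : ‖a - y‖ ^ 2 ≤ ‖a + (t : ℂ) • (q - a) - y‖ ^ 2 :=
    pow_le_pow_left₀ (norm_nonneg _) h1 2
  have h3 : a + (t : ℂ) • (q - a) - y = (a - y) + (t : ℂ) • (q - a) := by abel
  rw [h3, norm_add_sq (𝕜 := ℂ), inner_smul_right, norm_smul] at h2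
  simp only [Complex.mul_re, Complex.ofReal_re, Complex.ofReal_im, zero_mul, sub_zero,
    Complex.norm_real, Real.norm_eq_abs, abs_of_pos ht, RCLike.re_to_complex] at h2
  nlinarith [h2, ht]

lemma sum_sq_le_trace_sq {n : ℕ} {A : Matrix (Fin n) (Fin n) ℂ} (hA : A.PosSemidef) :
    ∑ i, ∑ j, ‖A i j‖ ^ 2 ≤ (A.trace.re) ^ 2 := by
  obtain ⟨B, rfl⟩ : ∃ B : Matrix (Fin n) (Fin n) ℂ, A = Bᴴ * B := by
    open scoped MatrixOrder Matrix.Norms.L2Operator in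
    exact CStarAlgebra.nonneg_iff_eq_star_mul_self.mp hA.nonneg
  set col : Fin n → EuclideanSpace ℂ (Fin n) := fun i => WithLp.toLp 2 (fun k => B k i) with hcol
  have hentry : ∀ i j, (Bᴴ * B) i j = ⟪col i, col j⟫_ℂ := by
    intro i j
    rw [Matrix.mul_apply, PiLp.inner_apply]
    simp [col, Matrix.conjTranspose_apply, RCLike.inner_apply]
    exact Finset.sum_congr rfl fun k _ => mul_comm _ _
  have hdiag : ∀ i, ((Bᴴ * B) i i).re = ‖col i‖ ^ 2 := by
    intro i
    rw [hentry]
    exact inner_self_eq_norm_sq (𝕜 := ℂ) (col i)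
  have htr : (Bᴴ * B).trace.re = ∑ i, ‖col i‖ ^ 2 := by
    rw [Matrix.trace, Complex.re_sum]
    exact Finset.sum_congr rfl fun i _ => hdiag i
  rw [htr]
  calc ∑ i, ∑ j, ‖(Bᴴ * B) i j‖ ^ 2
      ≤ ∑ i, ∑ j, (‖col i‖ * ‖col j‖) ^ 2 := by
        refine Finset.sum_le_sum fun i _ => Finset.sum_le_sum fun j _ => ?_
        have := norm_inner_le_norm (𝕜 := ℂ) (col i) (col j)
        rw [hentry]
        exact pow_le_pow_left₀ (norm_nonneg _) this 2
    _ = (∑ i, ‖col i‖ ^ 2) ^ 2 := by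
        rw [sq (∑ i, ‖col i‖ ^ 2), Finset.sum_mul_sum]
        refine Finset.sum_congr rfl fun i _ => Finset.sum_congr rfl fun j _ => ?_
        ring

lemma norm_vmap_le {n : ℕ} {A : Matrix (Fin n) (Fin n) ℂ} (hA : A.PosSemidef)
    {P : ℝ} (hP : 0 ≤ P) (htr : A.trace = (P : ℂ)) : ‖vmap A‖ ≤ P := by
  rw [← frob_eq_norm, frob]
  have h1 := sum_sq_le_trace_sq hA
  rw [htr] at h1
  simp only [Complex.ofReal_re] at h1
  calc Real.sqrt (∑ i, ∑ j, ‖A i j‖ ^ 2)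
      ≤ Real.sqrt (P ^ 2) := by
        apply Real.sqrt_le_sqrt
        simpa using h1
    _ = P := by rw [Real.sqrt_sq hP]

lemma key {n : ℕ} (Y : Matrix (Fin n) (Fin n) ℂ)
    (P P' : ℝ) (hP : 0 < P) (hP' : 0 < P') (hle : P' ≤ P)
    (QP QP' : Matrix (Fin n) (Fin n) ℂ)
    (hQP : QP.PosSemidef) (htr : QP.trace = (P : ℂ))
    (hmin : ∀ Q : Matrix (Fin n) (Fin n) ℂ, Q.PosSemidef → Q.trace = (P : ℂ) →
      frob (QP - Y) ≤ frob (Q - Y))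
    (hQP' : QP'.PosSemidef) (htr' : QP'.trace = (P' : ℂ))
    (hmin' : ∀ Q : Matrix (Fin n) (Fin n) ℂ, Q.PosSemidef → Q.trace = (P' : ℂ) →
      frob (QP' - Y) ≤ frob (Q - Y)) :
    frob (QP - QP') ≤ P - P' := by
  set c : ℝ := (P - P') / P with hc_def
  have hc : 0 ≤ c := div_nonneg (by linarith) hP.le
  have hc1 : c ≤ 1 := by
    rw [hc_def, div_le_one hP]
    linarith
  have hcP : c * P = P - P' := div_mul_cancel₀ _ (ne_of_gt hP)
  -- test points
  set Q1 : Matrix (Fin n) (Fin n) ℂ := QP' + (c : ℂ) • QP with hQ1_def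
  set Q2 : Matrix (Fin n) (Fin n) ℂ := ((1 - c : ℝ) : ℂ) • QP with hQ2_def
  have hQ1psd : Q1.PosSemidef := hQP'.add (psd_smul hQP hc)
  have hQ2psd : Q2.PosSemidef := psd_smul hQP (by linarith)
  have hQ1tr : Q1.trace = (P : ℂ) := by
    rw [hQ1_def, Matrix.trace_add, Matrix.trace_smul, htr, htr', smul_eq_mul]
    rw [← Complex.ofReal_mul, hcP]
    push_cast
    ring
  have hQ2tr : Q2.trace = (P' : ℂ) := by
    rw [hQ2_def, Matrix.trace_smul, htr, smul_eq_mul, ← Complex.ofReal_mul]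
    congr 1
    rw [sub_mul, one_mul, hcP]
    ring
  -- variational inequalities
  set a := vmap QP with ha
  set b := vmap QP' with hb
  set y := vmap Y with hy
  have hvi1 : 0 ≤ (⟪a - y, vmap Q1 - a⟫_ℂ).re := by
    apply vi
    intro t ht ht1
    have hfeas : (QP + (t : ℂ) • (Q1 - QP)).PosSemidef := by
      have : QP + (t : ℂ) • (Q1 - QP) = ((1 - t : ℝ) : ℂ) • QP + (t : ℂ) • Q1 := by
        push_cast
        rw [smul_sub, sub_smul, one_smul]
        abel
      rw [this]
      exact (psd_smul hQP (by linarith)).add (psd_smul hQ1psd ht.le)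
    have hftr : (QP + (t : ℂ) • (Q1 - QP)).trace = (P : ℂ) := by
      rw [Matrix.trace_add, Matrix.trace_smul, Matrix.trace_sub, htr, hQ1tr]
      simp
    have := hmin _ hfeas hftr
    rw [frob_eq_norm, frob_eq_norm, vmap_sub, vmap_sub, vmap_add, vmap_smul, vmap_sub] at this
    exact this
  have hvi2 : 0 ≤ (⟪b - y, vmap Q2 - b⟫_ℂ).re := by
    apply vi
    intro t ht ht1
    have hfeas : (QP' + (t : ℂ) • (Q2 - QP')).PosSemidef := by
      have : QP' + (t : ℂ) • (Q2 - QP') = ((1 - t : ℝ) : ℂ) • QP' + (t : ℂ) • Q2 := by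
        push_cast
        rw [smul_sub, sub_smul, one_smul]
        abel
      rw [this]
      exact (psd_smul hQP' (by linarith)).add (psd_smul hQ2psd ht.le)
    have hftr : (QP' + (t : ℂ) • (Q2 - QP')).trace = (P' : ℂ) := by
      rw [Matrix.trace_add, Matrix.trace_smul, Matrix.trace_sub, htr', hQ2tr]
      simp
    have := hmin' _ hfeas hftr
    rw [frob_eq_norm, frob_eq_norm, vmap_sub, vmap_sub, vmap_add, vmap_smul, vmap_sub] at this
    exact this
  -- rewrite images
  have hq1 : vmap Q1 = b + (c : ℂ) • a := by rw [hQ1_def, vmap_add, vmap_smul]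
  have hq2 : vmap Q2 = a - (c : ℂ) • a := by
    rw [hQ2_def, vmap_smul]
    push_cast
    rw [sub_smul, one_smul]
  rw [hq1] at hvi1
  rw [hq2] at hvi2
  -- combine
  set d := a - b with hd
  set w : EuclideanSpace ℂ (Fin n × Fin n) := (c : ℂ) • a with hw
  have hsum : 0 ≤ ((⟪a - y, (b + w) - a⟫_ℂ) + (⟪b - y, (a - w) - b⟫_ℂ)).re := by
    rw [Complex.add_re]
    exact add_nonneg hvi1 hvi2
  have hcomb : (⟪a - y, (b + w) - a⟫_ℂ) + (⟪b - y, (a - w) - b⟫_ℂ)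
      = ⟪d, w⟫_ℂ - ⟪d, d⟫_ℂ := by
    simp only [hd, inner_sub_left, inner_sub_right, inner_add_right]
    ring
  rw [hcomb, Complex.sub_re] at hsum
  have hdd : (⟪d, d⟫_ℂ).re = ‖d‖ ^ 2 := inner_self_eq_norm_sq (𝕜 := ℂ) d
  have hstep1 : ‖d‖ ^ 2 ≤ (⟪d, w⟫_ℂ).re := by
    rw [← hdd]; linarith
  have hstep2 : (⟪d, w⟫_ℂ).re ≤ ‖d‖ * ‖w‖ := by
    calc (⟪d, w⟫_ℂ).re ≤ ‖(⟪d, w⟫_ℂ)‖ := Complex.re_le_norm _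
      _ ≤ ‖d‖ * ‖w‖ := norm_inner_le_norm _ _
  have hwnorm : ‖w‖ ≤ P - P' := by
    rw [hw, norm_smul]
    have h1 : ‖a‖ ≤ P := norm_vmap_le hQP hP.le htr
    have h2 : ‖(c : ℂ)‖ = c := by
      rw [Complex.norm_real, Real.norm_eq_abs, abs_of_nonneg hc]
    rw [h2, ← hcP]
    exact mul_le_mul_of_nonneg_left h1 hc
  have hfinal : ‖d‖ ≤ P - P' := by
    rcases eq_or_lt_of_le (norm_nonneg d) with h0 | h0
    · rw [← h0]; linarith
    · have : ‖d‖ ^ 2 ≤ ‖d‖ * (P - P') := le_trans hstep1 (le_trans hstep2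
        (mul_le_mul_of_nonneg_left hwnorm (norm_nonneg d)))
      rw [sq] at this
      exact le_of_mul_le_mul_left this h0
  rw [frob_eq_norm, vmap_sub]
  exact hfinal

theorem projection_distance_trace_budget {n : ℕ} (Y : Matrix (Fin n) (Fin n) ℂ)
    (hY : Y.IsHermitian) (P P' : ℝ) (hP : 0 < P) (hP' : 0 < P')
    (QP QP' : Matrix (Fin n) (Fin n) ℂ)
    (hQP : QP.PosSemidef) (htr : QP.trace = (P : ℂ))
    (hmin : ∀ Q : Matrix (Fin n) (Fin n) ℂ, Q.PosSemidef → Q.trace = (P : ℂ) →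
      frob (QP - Y) ≤ frob (Q - Y))
    (hQP' : QP'.PosSemidef) (htr' : QP'.trace = (P' : ℂ))
    (hmin' : ∀ Q : Matrix (Fin n) (Fin n) ℂ, Q.PosSemidef → Q.trace = (P' : ℂ) →
      frob (QP' - Y) ≤ frob (Q - Y)) :
    frob (QP - QP') ≤ |P - P'| := by
  rcases le_total P' P with hle | hle
  · rw [abs_of_nonneg (by linarith)]
    exact key Y P P' hP hP' hle QP QP' hQP htr hmin hQP' htr' hmin'
  · rw [abs_of_nonpos (by linarith)]
    have hswap : frob (QP - QP') = frob (QP' - QP) := by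
      rw [frob_eq_norm, frob_eq_norm, vmap_sub, vmap_sub, ← norm_neg]
      congr 1
      abel
    rw [hswap]
    have := key Y P' P hP' hP hle QP' QP hQP' htr' hmin' hQP htr hmin
    linarith
end
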